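/- Let A be a minimally non-totally unimodular square matrix and let x be a column vector of the same height. The matrix obtained from A by appending the column x is totally equimodular if and only if x is the zero vector or x = ±A^j for some column A^j of A. -/

import Mathlib

open Function



/-- All the nonzero maximal (m×m) subdeterminants of `A` have the same absolute value. -/
def Equimodular {m n : ℕ} (A : Matrix (Fin m) (Fin n) ℚ) : Prop :=
  ∃ d : ℚ, ∀ g : Fin m ↪ Fin n,
    (A.submatrix id g).det ≠ 0 → |(A.submatrix id g).det| = d

/-- Every set of linearly independent rows of `A` forms an equimodular matrix. -/
def TotallyEquimodular {m n : ℕ} (A : Matrix (Fin m) (Fin n) ℚ) : Prop :=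
  ∀ (k : ℕ) (e : Fin k ↪ Fin m),
    LinearIndependent ℚ (fun i => A (e i)) → Equimodular (A.submatrix e id)

/-- `A` is not totally unimodular but every proper submatrix of `A` is. -/
def MinNonTU {m n : ℕ} (A : Matrix (Fin m) (Fin n) ℚ) : Prop :=
  ¬ A.IsTotallyUnimodular ∧
    ∀ (k l : ℕ) (e : Fin k ↪ Fin m) (f : Fin l ↪ Fin n), k < m ∨ l < n →
      (A.submatrix e f).IsTotallyUnimodular


namespace Stmt8

/-- `q` is zero or has absolute value one. -/
def U (q : ℚ) : Prop := |q| = 0 ∨ |q| = 1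

lemma U_of_signRange {q : ℚ} (h : q ∈ Set.range SignType.cast) : U q := by
  obtain ⟨s, rfl⟩ := h
  cases s <;> simp [U]

lemma signRange_of_U {q : ℚ} (h : U q) : q ∈ Set.range SignType.cast := by
  rcases h with h | h
  · exact ⟨0, by simpa [eq_comm] using (abs_eq_zero.mp h).symm⟩
  · rcases (abs_eq (by norm_num : (0:ℚ) ≤ 1)).mp h with h | h
    · exact ⟨1, by simp [h]⟩
    · exact ⟨-1, by simp [h]⟩

lemma U_of_abs_eq {a b : ℚ} (h : |a| = |b|) (hb : U b) : U a := by
  rcases hb with hb | hb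
  · exact Or.inl (h.trans hb)
  · exact Or.inr (h.trans hb)

lemma U.div {a b : ℚ} (ha : U a) (hb : |b| = 1) : U (a / b) := by
  rcases ha with ha | ha
  · exact Or.inl (by rw [abs_div, ha, hb]; norm_num)
  · exact Or.inr (by rw [abs_div, ha, hb]; norm_num)

lemma U.mul {a b : ℚ} (ha : U a) (hb : U b) : U (a * b) := by
  rcases ha with ha | ha <;> rcases hb with hb | hb <;>
    [exact Or.inl (by rw [abs_mul, ha, hb]; ring);
     exact Or.inl (by rw [abs_mul, ha, hb]; ring);
     exact Or.inl (by rw [abs_mul, ha, hb]; ring);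
     exact Or.inr (by rw [abs_mul, ha, hb]; ring)]

lemma U_neg_one_pow (k : ℕ) : U ((-1 : ℚ) ^ k) := Or.inr (by simp [abs_pow])

lemma not_U_ne_zero {q : ℚ} (h : ¬ U q) : q ≠ 0 := fun hq => h (Or.inl (by simp [hq]))

/-- Schur-complement style pivot identity at the (0,0) corner. -/
lemma pivot_det {t : ℕ} (M : Matrix (Fin (t+1)) (Fin (t+1)) ℚ) (ha : M 0 0 ≠ 0) :
    M.det = M 0 0 *
      (Matrix.of fun i j : Fin t => M i.succ j.succ - M i.succ 0 * M 0 j.succ / M 0 0).det := by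
  set c : Fin (t+1) → ℚ := fun i => if i = 0 then 0 else -(M i 0 / M 0 0) with hc
  set X : Matrix (Fin (t+1)) (Fin (t+1)) ℚ := Matrix.of fun i j => M i j + c i * M 0 j with hX
  have hdet : X.det = M.det :=
    Matrix.det_eq_of_forall_row_eq_smul_add_const c 0 (by simp [hc]) (fun i j => rfl)
  have hcol0 : ∀ i : Fin (t+1), i ≠ 0 → X i 0 = 0 := by
    intro i hi
    simp only [hX, Matrix.of_apply, hc, if_neg hi]
    field_simp
    ring
  rw [← hdet, Matrix.det_succ_column_zero]
  rw [Finset.sum_eq_single 0]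
  · have h00 : X 0 0 = M 0 0 := by simp [hX, hc]
    rw [h00]
    simp only [Fin.val_zero, pow_zero, one_mul, Fin.succAbove_zero]
    have hs : X.submatrix Fin.succ Fin.succ =
        Matrix.of fun i j : Fin t => M i.succ j.succ - M i.succ 0 * M 0 j.succ / M 0 0 := by
      ext i j
      simp only [Matrix.submatrix_apply, hX, Matrix.of_apply, hc, if_neg (Fin.succ_ne_zero i)]
      ring
    rw [hs]
  · intro b _ hb
    rw [hcol0 b hb]; ring
  · intro h; exact absurd (Finset.mem_univ _) h

lemma exists_comp_eq {k N : ℕ} {u v : Fin k → Fin N} (hu : Injective u) (hv : Injective v)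
    (h : Set.range u = Set.range v) : ∃ σ : Equiv.Perm (Fin k), v ∘ σ = u := by
  refine ⟨(Equiv.ofInjective u hu).trans ((Equiv.setCongr h).trans
    (Equiv.ofInjective v hv).symm), ?_⟩
  funext i
  simp only [comp_apply, Equiv.trans_apply, Equiv.setCongr_apply]
  exact Equiv.apply_ofInjective_symm hv _

/-- Submatrices given by index maps with the same ranges have the same |det|. -/
lemma abs_det_congr {k N N' : ℕ} (M : Matrix (Fin N) (Fin N') ℚ)
    {u u' : Fin k → Fin N} {v v' : Fin k → Fin N'}
    (hu : Injective u) (hu' : Injective u') (hv : Injective v) (hv' : Injective v')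
    (hru : Set.range u = Set.range u') (hrv : Set.range v = Set.range v') :
    |(M.submatrix u v).det| = |(M.submatrix u' v').det| := by
  obtain ⟨σ, hσ⟩ := exists_comp_eq hu hu' hru
  obtain ⟨τ, hτ⟩ := exists_comp_eq hv hv' hrv
  have : M.submatrix u v = (M.submatrix u' v').submatrix σ τ := by
    rw [Matrix.submatrix_submatrix, hσ, hτ]
  rw [this]
  exact Matrix.abs_det_submatrix_equiv_equiv σ τ (M.submatrix u' v')

lemma inj_cons_succ {t N : ℕ} {f : Fin t → Fin N} (hf : Injective f) :
    Injective (Fin.cons 0 (Fin.succ ∘ f) : Fin (t+1) → Fin (N+1)) := by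
  intro i j h
  induction i using Fin.cases <;> induction j using Fin.cases <;>
    simp_all [Fin.succ_ne_zero, (Fin.succ_ne_zero _).symm, hf.eq_iff]

lemma inj_cons_succAbove {N : ℕ} (r : Fin (N+1)) :
    Injective (Fin.cons r r.succAbove : Fin (N+1) → Fin (N+1)) := by
  intro i j h
  induction i using Fin.cases <;> induction j using Fin.cases <;> simp_all

lemma range_cons_succAbove {N : ℕ} (r : Fin (N+1)) :
    Set.range (Fin.cons r r.succAbove : Fin (N+1) → Fin (N+1)) = Set.univ := by
  apply Set.eq_univ_of_forall
  intro z
  by_cases hz : z = r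
  · exact ⟨0, by simp [hz]⟩
  · obtain ⟨w, hw⟩ := Fin.exists_succAbove_eq hz
    exact ⟨w.succ, by simp [hw]⟩

lemma range_comp_cons {N : ℕ} (r i : Fin (N+1+1)) (i' : Fin (N+1)) (hri : r ≠ i)
    (hi' : r.succAbove i' = i) :
    Set.range ((Fin.cons r r.succAbove : Fin (N+2) → Fin (N+2)) ∘
      (Fin.cons 0 (Fin.succ ∘ i'.succAbove) : Fin (N+1) → Fin (N+2))) =
    Set.range i.succAbove := by
  rw [Fin.range_succAbove]
  ext z
  simp only [Set.mem_range, Set.mem_compl_iff, Set.mem_singleton_iff]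
  constructor
  · rintro ⟨p, rfl⟩
    induction p using Fin.cases with
    | zero => simpa using hri
    | succ q =>
      simp only [comp_apply, Fin.cons_succ, Fin.cons_zero]
      rw [← hi']
      exact fun h => Fin.succAbove_ne i' q (Fin.succAbove_right_injective h)
  · intro hz
    by_cases hzr : z = r
    · exact ⟨0, by simp [hzr]⟩
    · obtain ⟨w, hw⟩ := Fin.exists_succAbove_eq hzr
      have hwi' : w ≠ i' := by
        intro h; rw [h, hi'] at hw; exact hz hw.symm
      obtain ⟨p, hp⟩ := Fin.exists_succAbove_eq hwi'
      exact ⟨p.succ, by simp [Fin.cons_succ, hp, hw]⟩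

lemma camion : ∀ (m : ℕ) (A : Matrix (Fin (m+1)) (Fin (m+1)) ℚ),
    (∀ (t : ℕ) (f g : Fin t → Fin (m+1)), t ≤ m → Injective f → Injective g →
      U (A.submatrix f g).det) →
    ¬ U A.det →
    ∀ i j : Fin (m+1), (A.submatrix i.succAbove j.succAbove).det ≠ 0 := by
  intro m
  induction m with
  | zero =>
    intro A _ _ i j
    simp [Matrix.det_fin_zero]
  | succ m ih =>
    intro A hmin hdet i j
    have h1 : ∀ r s : Fin (m+2), U (A r s) := by
      intro r s
      have := hmin 1 (fun _ => r) (fun _ => s) (by omega)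
        (fun a b _ => Subsingleton.elim a b) (fun a b _ => Subsingleton.elim a b)
      simpa [Matrix.det_fin_one] using this
    have hpiv : ∃ r s, r ≠ i ∧ s ≠ j ∧ A r s ≠ 0 := by
      by_contra hno
      push_neg at hno
      obtain ⟨c, hc⟩ := exists_ne j
      apply hdet
      have hAdet : A.det = (-1 : ℚ)^((i : ℕ)+(c : ℕ)) * A i c *
          (A.submatrix i.succAbove c.succAbove).det := by
        rw [Matrix.det_succ_column A c]
        apply Finset.sum_eq_single
        · intro r _ hr
          rw [hno r c hr hc]; ring
        · intro h; exact absurd (Finset.mem_univ _) h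
      rw [hAdet]
      exact ((U_neg_one_pow _).mul (h1 i c)).mul
        (hmin (m+1) _ _ le_rfl Fin.succAbove_right_injective Fin.succAbove_right_injective)
    obtain ⟨r, s, hri, hsj, hars⟩ := hpiv
    have ha1 : |A r s| = 1 := by
      rcases h1 r s with h | h
      · exact absurd (abs_eq_zero.mp h) hars
      · exact h
    set At := A.submatrix (Fin.cons r r.succAbove) (Fin.cons s s.succAbove) with hAt
    have hAt00 : At 0 0 = A r s := by simp [hAt]
    set A' : Matrix (Fin (m+1)) (Fin (m+1)) ℚ :=
      Matrix.of fun p q => At p.succ q.succ - At p.succ 0 * At 0 q.succ / At 0 0 with hA'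
    have transfer : ∀ (t : ℕ) (f : Fin t → Fin (m+1)) (g : Fin t → Fin (m+1)),
        (A.submatrix ((Fin.cons r r.succAbove : Fin (m+2) → Fin (m+2)) ∘
            (Fin.cons 0 (Fin.succ ∘ f)))
          ((Fin.cons s s.succAbove : Fin (m+2) → Fin (m+2)) ∘
            (Fin.cons 0 (Fin.succ ∘ g)))).det
          = A r s * (A'.submatrix f g).det := by
      intro t f g
      rw [← Matrix.submatrix_submatrix, ← hAt]
      have hM00 : (At.submatrix (Fin.cons 0 (Fin.succ ∘ f)) (Fin.cons 0 (Fin.succ ∘ g))) 0 0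
          = A r s := by simp [hAt]
      have hp := pivot_det (At.submatrix (Fin.cons 0 (Fin.succ ∘ f))
        (Fin.cons 0 (Fin.succ ∘ g))) (by rw [hM00]; exact hars)
      rw [hp, hM00]
      have hschur : (Matrix.of fun p q : Fin t =>
          (At.submatrix (Fin.cons 0 (Fin.succ ∘ f)) (Fin.cons 0 (Fin.succ ∘ g))) p.succ q.succ -
          (At.submatrix (Fin.cons 0 (Fin.succ ∘ f)) (Fin.cons 0 (Fin.succ ∘ g))) p.succ 0 *
          (At.submatrix (Fin.cons 0 (Fin.succ ∘ f)) (Fin.cons 0 (Fin.succ ∘ g))) 0 q.succ /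
          A r s)
          = A'.submatrix f g := by
        ext p q
        simp [hA', Fin.cons_succ, Fin.cons_zero, hAt]
      rw [hschur]
    have hA'min : ∀ (t : ℕ) (f g : Fin t → Fin (m+1)), t ≤ m → Injective f → Injective g →
        U (A'.submatrix f g).det := by
      intro t f g ht hf hg
      have h := transfer t f g
      have hU : U (A.submatrix ((Fin.cons r r.succAbove : Fin (m+2) → Fin (m+2)) ∘
            (Fin.cons 0 (Fin.succ ∘ f)))
          ((Fin.cons s s.succAbove : Fin (m+2) → Fin (m+2)) ∘
            (Fin.cons 0 (Fin.succ ∘ g)))).det :=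
        hmin (t+1) _ _ (by omega) ((inj_cons_succAbove r).comp (inj_cons_succ hf))
          ((inj_cons_succAbove s).comp (inj_cons_succ hg))
      have heq : (A'.submatrix f g).det = (A.submatrix
          ((Fin.cons r r.succAbove : Fin (m+2) → Fin (m+2)) ∘ (Fin.cons 0 (Fin.succ ∘ f)))
          ((Fin.cons s s.succAbove : Fin (m+2) → Fin (m+2)) ∘
            (Fin.cons 0 (Fin.succ ∘ g)))).det / A r s := by
        rw [h, mul_div_cancel_left₀ _ hars]
      rw [heq]
      exact hU.div ha1
    have hA'det : ¬ U A'.det := by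
      intro hU'
      have h := transfer (m+1) id id
      have hid : (Fin.cons 0 (Fin.succ ∘ (id : Fin (m+1) → Fin (m+1))) :
          Fin (m+2) → Fin (m+2)) = id := by
        funext p
        induction p using Fin.cases <;> simp
      rw [hid] at h
      simp only [Function.comp_id, Matrix.submatrix_id_id] at h
      have habs : |A.det| = |A'.det| := by
        have h2 : |(A.submatrix (Fin.cons r r.succAbove) (Fin.cons s s.succAbove)).det|
            = |(A.submatrix id id).det| :=
          abs_det_congr A (inj_cons_succAbove r) injective_id (inj_cons_succAbove s) injective_id
            (by rw [range_cons_succAbove, Set.range_id]) (by rw [range_cons_succAbove, Set.range_id])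
        rw [Matrix.submatrix_id_id] at h2
        rw [← h2, h, abs_mul, ha1, one_mul]
      exact hdet (U_of_abs_eq habs hU')
    obtain ⟨i', hi'⟩ := Fin.exists_succAbove_eq (Ne.symm hri)
    obtain ⟨j', hj'⟩ := Fin.exists_succAbove_eq (Ne.symm hsj)
    have hne' := ih A' hA'min hA'det i' j'
    have h := transfer m i'.succAbove j'.succAbove
    have hbig : (A.submatrix ((Fin.cons r r.succAbove : Fin (m+2) → Fin (m+2)) ∘
            (Fin.cons 0 (Fin.succ ∘ i'.succAbove)))
          ((Fin.cons s s.succAbove : Fin (m+2) → Fin (m+2)) ∘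
            (Fin.cons 0 (Fin.succ ∘ j'.succAbove)))).det ≠ 0 := by
      rw [h]; exact mul_ne_zero hars hne'
    have habs := abs_det_congr A
      (u := i.succAbove) (u' := (Fin.cons r r.succAbove : Fin (m+2) → Fin (m+2)) ∘
            (Fin.cons 0 (Fin.succ ∘ i'.succAbove)))
      (v := j.succAbove) (v' := (Fin.cons s s.succAbove : Fin (m+2) → Fin (m+2)) ∘
            (Fin.cons 0 (Fin.succ ∘ j'.succAbove)))
      Fin.succAbove_right_injective
      ((inj_cons_succAbove r).comp (inj_cons_succ Fin.succAbove_right_injective))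
      Fin.succAbove_right_injective
      ((inj_cons_succAbove s).comp (inj_cons_succ Fin.succAbove_right_injective))
      (range_comp_cons r i i' hri hi').symm
      (range_comp_cons s j j' hsj hj').symm
    intro h0
    rw [h0, abs_zero] at habs
    exact hbig (abs_eq_zero.mp habs.symm)

lemma U_of_h01 {q : ℚ} (h : q = 0 ∨ q = 1 ∨ q = -1) : U q := by
  rcases h with h | h | h <;> simp [U, h]

variable {n : ℕ} {A : Matrix (Fin n) (Fin n) ℚ}

lemma proper_U (hA : MinNonTU A) :
    ∀ (t : ℕ) (f g : Fin t → Fin n), t < n → Injective f → Injective g →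
      U (A.submatrix f g).det := by
  intro t f g ht hf hg
  have hTU := hA.2 t n ⟨f, hf⟩ (Embedding.refl _) (Or.inl ht)
  have := hTU t id g injective_id hg
  apply U_of_signRange
  simpa [Matrix.submatrix_submatrix, Function.Embedding.coe_refl] using this

lemma not_U_det (hA : MinNonTU A) : ¬ U A.det := by
  intro hU
  apply hA.1
  intro k f g hf hg
  have hk : k ≤ n := by simpa using Fintype.card_le_of_injective f hf
  rcases lt_or_eq_of_le hk with hlt | heq
  · exact signRange_of_U (proper_U hA k f g hlt hf hg)
  · subst heq
    have hrf : Set.range f = Set.range (id : Fin k → Fin k) := by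
      rw [Set.range_id, Set.range_eq_univ]
      exact Finite.injective_iff_surjective.mp hf
    have hrg : Set.range g = Set.range (id : Fin k → Fin k) := by
      rw [Set.range_id, Set.range_eq_univ]
      exact Finite.injective_iff_surjective.mp hg
    have habs := abs_det_congr A hf injective_id hg injective_id hrf hrg
    rw [Matrix.submatrix_id_id] at habs
    exact signRange_of_U (U_of_abs_eq habs hU)

lemma two_le (h01 : ∀ i j, A i j = 0 ∨ A i j = 1 ∨ A i j = -1) (hA : MinNonTU A) : 2 ≤ n := by
  by_contra hn
  push_neg at hn
  interval_cases n
  · apply hA.1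
    intro k f g hf hg
    cases k with
    | zero => exact ⟨1, by simp⟩
    | succ k => exact (f 0).elim0
  · apply hA.1
    intro k f g hf hg
    match k with
    | 0 => exact ⟨1, by simp⟩
    | 1 =>
      rw [Matrix.det_fin_one]
      exact signRange_of_U (U_of_h01 (h01 _ _))
    | (k+2) =>
      have : (0 : Fin (k+2)) = 1 := hf (Subsingleton.elim _ _)
      simp at this

variable {n : ℕ} (A : Matrix (Fin n) (Fin n) ℚ) (x : Fin n → ℚ)

/-- rows of `[A | x]` indexed injectively are linearly independent when `det A ≠ 0`. -/
lemma snoc_rows_li (hdet : A.det ≠ 0) {k : ℕ} (e : Fin k → Fin n) (he : Injective e) :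
    LinearIndependent ℚ
      (fun i => (Matrix.of fun i => Fin.snoc (A i) (x i) : Matrix (Fin n) (Fin (n+1)) ℚ) (e i)) := by
  have hA : LinearIndependent ℚ (fun i => A i) :=
    Matrix.linearIndependent_rows_iff_isUnit.mpr
      ((Matrix.isUnit_iff_isUnit_det A).mpr (isUnit_iff_ne_zero.mpr hdet))
  have hAe : LinearIndependent ℚ ((fun i => A i) ∘ e) := hA.comp e he
  apply LinearIndependent.of_comp (LinearMap.funLeft ℚ ℚ Fin.castSucc)
  convert hAe using 1
  funext i
  ext j
  simp [LinearMap.funLeft]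

/-- The key case analysis: any nonzero maximal minor of a submatrix of `[A | x]`
(for `x` zero or ± a column of `A`) has the same abs as a corresponding minor of `A`. -/
lemma snoc_minor_abs
    (hx : x = 0 ∨ ∃ (j : Fin n) (ε : ℚ), (ε = 1 ∨ ε = -1) ∧ ∀ i, x i = ε * A i j)
    {k : ℕ} (e : Fin k → Fin n) (he : Injective e) (g : Fin k → Fin (n+1)) (hg : Injective g)
    (hne : ((Matrix.of fun i => Fin.snoc (A i) (x i) : Matrix (Fin n) (Fin (n+1)) ℚ).submatrix e g).det ≠ 0) :
    ∃ g' : Fin k → Fin n, Injective g' ∧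
      |((Matrix.of fun i => Fin.snoc (A i) (x i) : Matrix (Fin n) (Fin (n+1)) ℚ).submatrix e g).det|
        = |(A.submatrix e g').det| := by
  set B : Matrix (Fin n) (Fin (n+1)) ℚ := Matrix.of fun i => Fin.snoc (A i) (x i) with hB
  by_cases hlast : ∃ c0, g c0 = Fin.last n
  · obtain ⟨c0, hc0⟩ := hlast
    rcases hx with hx0 | ⟨j, ε, hε, hxj⟩
    · exfalso
      apply hne
      apply Matrix.det_eq_zero_of_column_eq_zero c0
      intro p
      simp [hB, hc0, hx0]
    · -- x = ε • column j
      by_cases hj : ∃ c1, c1 ≠ c0 ∧ g c1 = j.castSucc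
      · exfalso
        obtain ⟨c1, hc1ne, hc1⟩ := hj
        apply hne
        have hcol : ∀ p, (B.submatrix e g) p c0 = ε * (B.submatrix e g) p c1 := by
          intro p
          simp [hB, hc0, hc1, hxj]
        have h1 : B.submatrix e g = (B.submatrix e g).updateCol c0
            (ε • fun p => (B.submatrix e g) p c1) := by
          ext p c
          rcases eq_or_ne c c0 with rfl | hc
          · rw [Matrix.updateCol_self]
            exact hcol p
          · rw [Matrix.updateCol_ne hc]
        rw [h1, Matrix.det_updateCol_smul,
          Matrix.det_updateCol_eq_zero hc1ne, mul_zero]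
      · push_neg at hj
        -- replace the x-column by column j of A
        have hgc : ∀ c, c ≠ c0 → g c ≠ Fin.last n := by
          intro c hc hgc
          exact hc (hg (hgc.trans hc0.symm))
        set g' : Fin k → Fin n := fun c =>
          if h : c = c0 then j else (g c).castPred (hgc c h) with hg'
        have hg'inj : Injective g' := by
          intro c c' hcc
          by_cases h : c = c0 <;> by_cases h' : c' = c0
          · rw [h, h']
          · exfalso
            rw [hg'] at hcc
            simp only [h, h', dif_pos, dif_neg, not_false_iff] at hcc
            exact hj c' h' (by rw [hcc, Fin.castSucc_castPred])
          · exfalso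
            rw [hg'] at hcc
            simp only [h, h', dif_pos, dif_neg, not_false_iff] at hcc
            exact hj c h (by rw [← hcc, Fin.castSucc_castPred])
          · rw [hg'] at hcc
            simp only [h, h', dif_neg, not_false_iff] at hcc
            have := congrArg Fin.castSucc hcc
            rw [Fin.castSucc_castPred, Fin.castSucc_castPred] at this
            exact hg this
        refine ⟨g', hg'inj, ?_⟩
        have hM : B.submatrix e g = (A.submatrix e g').updateCol c0
            (ε • fun p => A (e p) j) := by
          ext p c
          rcases eq_or_ne c c0 with rfl | hc
          · rw [Matrix.updateCol_self]
            simp [hB, hc0, hxj]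
          · rw [Matrix.updateCol_ne hc]
            have : g c = (g' c).castSucc := by
              rw [hg']
              simp only [hc, dif_neg, not_false_iff]
              rw [Fin.castSucc_castPred]
            simp [hB, this]
        have hcself : (fun p => A (e p) j) = fun p => (A.submatrix e g') p c0 := by
          funext p
          simp [hg']
        rw [hM, Matrix.det_updateCol_smul, hcself]
        have : (A.submatrix e g').updateCol c0 (fun p => (A.submatrix e g') p c0)
            = A.submatrix e g' := by
          rw [Matrix.updateCol_eq_self]
        rw [this, abs_mul]
        rcases hε with rfl | rfl <;> norm_num
  · push_neg at hlast
    set g' : Fin k → Fin n := fun c => (g c).castPred (hlast c) with hg'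
    have hg'inj : Injective g' := by
      intro c c' hcc
      apply hg
      have := congrArg Fin.castSucc hcc
      rwa [Fin.castSucc_castPred, Fin.castSucc_castPred] at this
    refine ⟨g', hg'inj, ?_⟩
    have : B.submatrix e g = A.submatrix e g' := by
      ext p c
      have : g c = (g' c).castSucc := by rw [hg', Fin.castSucc_castPred]
      simp [hB, this]
    rw [this]

lemma te_of (hA : MinNonTU A)
    (hx : x = 0 ∨ ∃ (j : Fin n) (ε : ℚ), (ε = 1 ∨ ε = -1) ∧ ∀ i, x i = ε * A i j) :
    TotallyEquimodular (Matrix.of fun i => Fin.snoc (A i) (x i)) := by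
  set B : Matrix (Fin n) (Fin (n+1)) ℚ := Matrix.of fun i => Fin.snoc (A i) (x i) with hB
  intro k e _hli
  have hk : k ≤ n := by simpa using Fintype.card_le_of_injective e e.injective
  have hsub : ∀ g : Fin k ↪ Fin (n+1),
      (B.submatrix (⇑e) id).submatrix id ⇑g = B.submatrix (⇑e) (⇑g) := by
    intro g
    rw [Matrix.submatrix_submatrix, Function.comp_id, Function.id_comp]
  rcases lt_or_eq_of_le hk with hlt | heq
  · refine ⟨1, ?_⟩
    intro g hg
    rw [hsub g] at hg ⊢
    obtain ⟨g', hg'inj, habs⟩ := snoc_minor_abs A x hx e e.injective g g.injective hg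
    rw [habs]
    rcases proper_U hA k e g' hlt e.injective hg'inj with h | h
    · exfalso
      apply hg
      rw [← abs_eq_zero, habs, h]
    · exact h
  · subst heq
    refine ⟨|A.det|, ?_⟩
    intro g hg
    rw [hsub g] at hg ⊢
    obtain ⟨g', hg'inj, habs⟩ := snoc_minor_abs A x hx e e.injective g g.injective hg
    rw [habs]
    have h2 := abs_det_congr A e.injective injective_id hg'inj injective_id
      (by rw [Set.range_id, Set.range_eq_univ]
          exact Finite.injective_iff_surjective.mp e.injective)
      (by rw [Set.range_id, Set.range_eq_univ]
          exact Finite.injective_iff_surjective.mp hg'inj)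
    rwa [Matrix.submatrix_id_id] at h2

lemma det_updateColumn_finset_sum {k : ℕ} (M : Matrix (Fin k) (Fin k) ℚ) (c : Fin k)
    {ι : Type*} [DecidableEq ι] (s : Finset ι) (f : ι → Fin k → ℚ) :
    (M.updateCol c (fun p => ∑ j ∈ s, f j p)).det = ∑ j ∈ s, (M.updateCol c (f j)).det := by
  induction s using Finset.induction with
  | empty =>
    simp only [Finset.sum_empty]
    apply Matrix.det_eq_zero_of_column_eq_zero c
    intro i
    rw [Matrix.updateCol_self]
  | @insert a s hnotmem ih =>
    have h1 : (fun p => ∑ j ∈ insert a s, f j p) = f a + fun p => ∑ j ∈ s, f j p := by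
      funext p
      rw [Finset.sum_insert hnotmem]
      rfl
    rw [h1, Matrix.det_updateCol_add, ih, Finset.sum_insert hnotmem]

lemma forward {m : ℕ} (A : Matrix (Fin (m+2)) (Fin (m+2)) ℚ) (x : Fin (m+2) → ℚ)
    (hA : MinNonTU A)
    (hTE : TotallyEquimodular (Matrix.of fun i => Fin.snoc (A i) (x i))) :
    x = 0 ∨ ∃ j : Fin (m+2), (∀ i, x i = A i j) ∨ (∀ i, x i = -A i j) := by
  set B : Matrix (Fin (m+2)) (Fin (m+3)) ℚ := Matrix.of fun i => Fin.snoc (A i) (x i) with hB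
  have hUdet := not_U_det hA
  have hdetA : A.det ≠ 0 := fun h => hUdet (Or.inl (by rw [h]; simp))
  have hprop := proper_U hA
  have hcof : ∀ i j : Fin (m+2), |(A.submatrix i.succAbove j.succAbove).det| = 1 := by
    intro i j
    have hnz := camion (m+1) A (fun t f g ht hf hg => hprop t f g (by omega) hf hg) hUdet i j
    rcases hprop (m+1) i.succAbove j.succAbove (by omega)
      Fin.succAbove_right_injective Fin.succAbove_right_injective with h | h
    · exact absurd (abs_eq_zero.mp h) hnz
    · exact h
  have hli : ∀ (k : ℕ) (e : Fin k ↪ Fin (m+2)), LinearIndependent ℚ fun i => B (e i) :=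
    fun k e => snoc_rows_li A x hdetA e e.injective
  -- full-row equimodularity
  obtain ⟨d0, hd0⟩ := hTE (m+2) (Embedding.refl _) (hli _ _)
  have hsub : ∀ (k : ℕ) (e : Fin k → Fin (m+2)) (g : Fin k → Fin (m+3)),
      (B.submatrix e id).submatrix id g = B.submatrix e g := by
    intro k e g
    rw [Matrix.submatrix_submatrix, Function.comp_id, Function.id_comp]
  have hd0A : d0 = |A.det| := by
    have hAeq : B.submatrix (⇑(Embedding.refl (Fin (m+2))))
        ⇑(⟨Fin.castSucc, Fin.castSucc_injective _⟩ : Fin (m+2) ↪ Fin (m+3)) = A := by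
      ext p c
      simp [hB]
    have := hd0 ⟨Fin.castSucc, Fin.castSucc_injective _⟩
    rw [hsub, hAeq] at this
    exact ((this hdetA).symm)
  -- update-column minors of full size
  have hcolEmbInj : ∀ j : Fin (m+2), Injective
      (fun c : Fin (m+2) => if c = j then Fin.last (m+2) else c.castSucc) := by
    intro j c c' h
    dsimp only at h
    by_cases hc : c = j <;> by_cases hc' : c' = j
    · rw [hc, hc']
    · rw [if_pos hc, if_neg hc'] at h
      exact absurd h.symm (Fin.castSucc_lt_last c').ne
    · rw [if_neg hc, if_pos hc'] at h
      exact absurd h (Fin.castSucc_lt_last c).ne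
    · rw [if_neg hc, if_neg hc'] at h
      exact Fin.castSucc_injective _ h

  have hupd : ∀ j : Fin (m+2),
      B.submatrix (⇑(Embedding.refl (Fin (m+2))))
        (fun c : Fin (m+2) => if c = j then Fin.last (m+2) else c.castSucc)
      = A.updateCol j x := by
    intro j
    ext p c
    rcases eq_or_ne c j with rfl | hc
    · simp [hB, Matrix.updateCol_self]
    · simp [hB, hc, Matrix.updateCol_ne hc]
  have key1 : ∀ j, (A.updateCol j x).det = 0 ∨ |(A.updateCol j x).det| = |A.det| := by
    intro j
    by_cases h : (A.updateCol j x).det = 0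
    · exact Or.inl h
    · refine Or.inr ?_
      have h2 := hd0 ⟨_, hcolEmbInj j⟩ (by
        simp only [Function.Embedding.coeFn_mk]
        rw [hsub, hupd j]
        exact h)
      simp only [Function.Embedding.coeFn_mk] at h2
      rw [hsub, hupd j] at h2
      rw [h2, hd0A]
  set y : Fin (m+2) → ℚ := fun j => (A.updateCol j x).det / A.det with hy
  have key2 : A.mulVec y = x := by
    have h1 : y = (A.det)⁻¹ • Matrix.cramer A x := by
      funext j
      rw [hy]
      simp [Matrix.cramer_apply, div_eq_inv_mul]
    rw [h1, Matrix.mulVec_smul, Matrix.mulVec_cramer, smul_smul,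
      inv_mul_cancel₀ hdetA, one_smul]
  have key3 : ∀ j, y j = 0 ∨ |y j| = 1 := by
    intro j
    rcases key1 j with h | h
    · exact Or.inl (by rw [hy]; dsimp only; rw [h, zero_div])
    · refine Or.inr ?_
      rw [hy]
      dsimp only
      rw [abs_div, h, div_self (abs_ne_zero.mpr hdetA)]
  have key4 : ∀ j1 j2 : Fin (m+2), j1 ≠ j2 → y j1 ≠ 0 → y j2 ≠ 0 → False := by
    intro j1 j2 hj12 hy1 hy2
    have hy1abs : |y j1| = 1 := (key3 j1).resolve_left hy1
    have hy2abs : |y j2| = 1 := (key3 j2).resolve_left hy2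
    set W := A.updateCol j1 x with hW
    have hWdet : W.det ≠ 0 := by
      intro h
      apply hy1
      rw [hy]
      dsimp only
      rw [← hW, h, zero_div]
    obtain ⟨i0, hi0⟩ : ∃ i0 : Fin (m+2), (W.submatrix i0.succAbove j2.succAbove).det ≠ 0 := by
      by_contra hall
      push_neg at hall
      apply hWdet
      rw [Matrix.det_succ_column W j2]
      apply Finset.sum_eq_zero
      intro i _
      rw [hall i, mul_zero]
    obtain ⟨cstar, hcstar⟩ := Fin.exists_succAbove_eq hj12
    set Asub := A.submatrix i0.succAbove j2.succAbove with hAsub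
    have hNeq : W.submatrix i0.succAbove j2.succAbove
        = Asub.updateCol cstar (fun p => x (i0.succAbove p)) := by
      ext p c
      rcases eq_or_ne c cstar with rfl | hc
      · rw [Matrix.updateCol_self, Matrix.submatrix_apply, hcstar, hW,
          Matrix.updateCol_self]
      · have hne : j2.succAbove c ≠ j1 := by
          rw [← hcstar]
          exact fun hh => hc (Fin.succAbove_right_injective hh)
        rw [Matrix.updateCol_ne hc, Matrix.submatrix_apply, hW, Matrix.updateCol_ne hne,
          hAsub, Matrix.submatrix_apply]
    have hxs : (fun p : Fin (m+1) => x (i0.succAbove p))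
        = fun p => ∑ j, y j * A (i0.succAbove p) j := by
      funext p
      rw [← key2]
      simp [Matrix.mulVec, dotProduct, mul_comm]
    have hexp : (W.submatrix i0.succAbove j2.succAbove).det
        = ∑ j, y j * (Asub.updateCol cstar (fun p => A (i0.succAbove p) j)).det := by
      rw [hNeq, hxs,
        det_updateColumn_finset_sum Asub cstar Finset.univ
          (fun j => fun p => y j * A (i0.succAbove p) j)]
      refine Finset.sum_congr rfl fun j _ => ?_
      rw [show (fun p => y j * A (i0.succAbove p) j)
            = y j • (fun p => A (i0.succAbove p) j) from rfl,
        Matrix.det_updateCol_smul]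
    have hzero : ∀ j, j ≠ j1 → j ≠ j2 →
        (Asub.updateCol cstar (fun p => A (i0.succAbove p) j)).det = 0 := by
      intro j hjne1 hjne2
      obtain ⟨cj, hcj⟩ := Fin.exists_succAbove_eq hjne2
      have hcjne : cj ≠ cstar := by
        intro h
        rw [h, hcstar] at hcj
        exact hjne1 hcj.symm
      have hfun : (fun p => A (i0.succAbove p) j) = fun p => Asub p cj := by
        funext p
        rw [hAsub, Matrix.submatrix_apply, hcj]
      rw [hfun]
      exact Matrix.det_updateCol_eq_zero hcjne
    have hterm1 : (Asub.updateCol cstar (fun p => A (i0.succAbove p) j1)).det = Asub.det := by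
      have hfun : (fun p => A (i0.succAbove p) j1) = fun p => Asub p cstar := by
        funext p
        rw [hAsub, Matrix.submatrix_apply, hcstar]
      rw [hfun, Matrix.updateCol_eq_self]
    set w2 : Fin (m+1) → Fin (m+2) := fun c => if c = cstar then j2 else j2.succAbove c with hw2
    have hw2inj : Injective w2 := by
      intro c c' h
      rw [hw2] at h
      dsimp only at h
      by_cases hc : c = cstar <;> by_cases hc' : c' = cstar
      · rw [hc, hc']
      · rw [if_pos hc, if_neg hc'] at h
        exact absurd h.symm (Fin.succAbove_ne j2 c')
      · rw [if_neg hc, if_pos hc'] at h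
        exact absurd h (Fin.succAbove_ne j2 c)
      · rw [if_neg hc, if_neg hc'] at h
        exact Fin.succAbove_right_injective h
    have hterm2eq : Asub.updateCol cstar (fun p => A (i0.succAbove p) j2)
        = A.submatrix i0.succAbove w2 := by
      ext p c
      rcases eq_or_ne c cstar with rfl | hc
      · rw [Matrix.updateCol_self, Matrix.submatrix_apply, hw2]
        dsimp only
        rw [if_pos rfl]
      · rw [Matrix.updateCol_ne hc, hAsub, Matrix.submatrix_apply, Matrix.submatrix_apply,
          hw2]
        dsimp only
        rw [if_neg hc]
    have hrw2 : Set.range w2 = Set.range (j1.succAbove) := by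
      rw [Fin.range_succAbove]
      ext z
      simp only [Set.mem_range, Set.mem_compl_iff, Set.mem_singleton_iff]
      constructor
      · rintro ⟨c, rfl⟩
        rw [hw2]
        dsimp only
        by_cases hc : c = cstar
        · rw [if_pos hc]
          exact Ne.symm hj12
        · rw [if_neg hc]
          intro hh
          rw [← hcstar] at hh
          exact hc (Fin.succAbove_right_injective hh)
      · intro hz
        by_cases hz2 : z = j2
        · exact ⟨cstar, by rw [hw2]; dsimp only; rw [if_pos rfl, hz2]⟩
        · obtain ⟨c, hc⟩ := Fin.exists_succAbove_eq hz2
          refine ⟨c, ?_⟩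
          have hcne : c ≠ cstar := by
            intro h
            rw [h, hcstar] at hc
            exact hz hc.symm
          rw [hw2]
          dsimp only
          rw [if_neg hcne]
          exact hc
    have habs2 : |(A.submatrix i0.succAbove w2).det| = 1 := by
      rw [abs_det_congr A Fin.succAbove_right_injective Fin.succAbove_right_injective hw2inj
        Fin.succAbove_right_injective rfl hrw2]
      exact hcof i0 j1
    have hdetN : (W.submatrix i0.succAbove j2.succAbove).det
        = y j1 * Asub.det + y j2 * (A.submatrix i0.succAbove w2).det := by
      rw [hexp, ← Finset.add_sum_erase _ _ (Finset.mem_univ j1)]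
      congr 1
      · rw [hterm1]
      · rw [Finset.sum_eq_single_of_mem j2
          (Finset.mem_erase.mpr ⟨Ne.symm hj12, Finset.mem_univ _⟩)]
        · rw [hterm2eq]
        · intro b hb hbne2
          have hbne1 : b ≠ j1 := (Finset.mem_erase.mp hb).1
          rw [hzero b hbne1 hbne2, mul_zero]
    obtain ⟨d1, hd1⟩ := hTE (m+1) ⟨i0.succAbove, Fin.succAbove_right_injective⟩ (hli _ _)
    have hgAinj : Injective (fun c : Fin (m+1) => ((j1.succAbove c).castSucc : Fin (m+3))) :=
      fun c c' h => Fin.succAbove_right_injective (Fin.castSucc_injective _ h)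
    have hgAeq : B.submatrix i0.succAbove (fun c => ((j1.succAbove c).castSucc : Fin (m+3)))
        = A.submatrix i0.succAbove j1.succAbove := by
      ext p c
      simp [hB]
    have hd11 : d1 = 1 := by
      have h := hd1 ⟨_, hgAinj⟩ (by
        simp only [Function.Embedding.coeFn_mk]
        rw [hsub, hgAeq]
        intro hh
        rw [← abs_eq_zero, hcof i0 j1] at hh
        norm_num at hh)
      simp only [Function.Embedding.coeFn_mk] at h
      rw [hsub, hgAeq, hcof i0 j1] at h
      exact h.symm
    set wN : Fin (m+1) → Fin (m+3) :=
      fun c => if c = cstar then Fin.last (m+2) else (j2.succAbove c).castSucc with hwN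
    have hwNinj : Injective wN := by
      intro c c' h
      rw [hwN] at h
      dsimp only at h
      by_cases hc : c = cstar <;> by_cases hc' : c' = cstar
      · rw [hc, hc']
      · rw [if_pos hc, if_neg hc'] at h
        exact absurd h.symm (Fin.castSucc_lt_last _).ne
      · rw [if_neg hc, if_pos hc'] at h
        exact absurd h (Fin.castSucc_lt_last _).ne
      · rw [if_neg hc, if_neg hc'] at h
        exact Fin.succAbove_right_injective (Fin.castSucc_injective _ h)
    have hNB : B.submatrix i0.succAbove wN = W.submatrix i0.succAbove j2.succAbove := by
      ext p c
      rcases eq_or_ne c cstar with rfl | hc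
      · rw [Matrix.submatrix_apply, Matrix.submatrix_apply, hwN]
        dsimp only
        rw [if_pos rfl, hcstar, hW, Matrix.updateCol_self]
        simp [hB]
      · have hne : j2.succAbove c ≠ j1 := by
          rw [← hcstar]
          exact fun hh => hc (Fin.succAbove_right_injective hh)
        rw [Matrix.submatrix_apply, Matrix.submatrix_apply, hwN]
        dsimp only
        rw [if_neg hc, hW, Matrix.updateCol_ne hne]
        simp [hB]
    have hdN1 : |(W.submatrix i0.succAbove j2.succAbove).det| = 1 := by
      have h := hd1 ⟨wN, hwNinj⟩ (by
        simp only [Function.Embedding.coeFn_mk]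
        rw [hsub, hNB]
        exact hi0)
      simp only [Function.Embedding.coeFn_mk] at h
      rw [hsub, hNB, hd11] at h
      exact h
    have ha : y j1 * Asub.det = 1 ∨ y j1 * Asub.det = -1 := by
      have : |y j1 * Asub.det| = 1 := by
        rw [abs_mul, hy1abs, hcof i0 j2, one_mul]
      exact (abs_eq (by norm_num : (0:ℚ) ≤ 1)).mp this
    have hb : y j2 * (A.submatrix i0.succAbove w2).det = 1 ∨
        y j2 * (A.submatrix i0.succAbove w2).det = -1 := by
      have : |y j2 * (A.submatrix i0.succAbove w2).det| = 1 := by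
        rw [abs_mul, hy2abs, habs2, one_mul]
      exact (abs_eq (by norm_num : (0:ℚ) ≤ 1)).mp this
    rw [hdetN] at hdN1
    rcases ha with h1 | h1 <;> rcases hb with h2 | h2 <;> rw [h1, h2] at hdN1 <;> norm_num at hdN1
  by_cases hz : ∀ j, y j = 0
  · left
    have hzy : y = 0 := funext hz
    rw [← key2, hzy, Matrix.mulVec_zero]
  · push_neg at hz
    obtain ⟨j0, hj0⟩ := hz
    right
    refine ⟨j0, ?_⟩
    have hsingle : y = Pi.single j0 (y j0) := by
      funext j
      rcases eq_or_ne j j0 with rfl | hj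
      · simp
      · rw [Pi.single_eq_of_ne hj]
        by_contra hyj
        exact key4 j j0 hj hyj hj0
    have hx : x = fun i => A i j0 * y j0 := by
      conv_lhs => rw [← key2, hsingle]
      exact Matrix.mulVec_single A j0 (y j0)
    rcases (key3 j0).resolve_left hj0 |> (abs_eq (by norm_num : (0:ℚ) ≤ 1)).mp with h1 | h1
    · left
      intro i
      rw [congrFun hx i, h1, mul_one]
    · right
      intro i
      rw [congrFun hx i, h1]
      ring

end Stmt8

theorem stmt8 {n : ℕ} (A : Matrix (Fin n) (Fin n) ℚ)
    (h01 : ∀ i j, A i j = 0 ∨ A i j = 1 ∨ A i j = -1) (hA : MinNonTU A)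
    (x : Fin n → ℚ) :
    TotallyEquimodular (Matrix.of fun i => Fin.snoc (A i) (x i)) ↔
      (x = 0 ∨ ∃ j : Fin n, (∀ i, x i = A i j) ∨ (∀ i, x i = -A i j)) := by
  have h2 : 2 ≤ n := Stmt8.two_le h01 hA
  obtain ⟨m, rfl⟩ : ∃ m, n = m + 2 := ⟨n - 2, by omega⟩
  constructor
  · intro hTE
    exact Stmt8.forward A x hA hTE
  · intro hx
    apply Stmt8.te_of A x hA
    rcases hx with h | ⟨j, h | h⟩
    · exact Or.inl h
    · exact Or.inr ⟨j, 1, Or.inl rfl, fun i => by rw [h i, one_mul]⟩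
    · exact Or.inr ⟨j, -1, Or.inr rfl, fun i => by rw [h i]; ring⟩
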